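/- For every constant c > 0 there exist ten points A, B, D, E, F, A', B', D', E', F' in Euclidean 3-space such that, writing C for the midpoint of segment EF and C' for the midpoint of segment B'D', the following hold: (i) the corresponding distances agree: dist(A,B) = dist(A',B'), dist(A,D) = dist(A',D'), dist(A,E) = dist(A',E'), dist(A,F) = dist(A',F'), dist(B,E) = dist(B',E'), dist(B,F) = dist(B',F'), dist(D,E) = dist(D',E'), dist(D,F) = dist(D',F'), dist(B,C) = dist(B',C'), dist(D,C) = dist(D',C'), dist(C,E) = dist(C',E'), dist(C,F) = dist(C',F'); (ii) the Lebesgue volume of the convex hull of {A, B, D, E, F} is strictly positive; and (iii) the Lebesgue volume of the union of the convex hull of {A', B', D', E'} and the convex hull of {A', B', D', F'} is strictly greater than c times the Lebesgue volume of the convex hull of {A, B, D, E, F}. -/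

import Mathlib

open Real MeasureTheory Set

noncomputable def pt (x y z : ℝ) : EuclideanSpace ℝ (Fin 3) := WithLp.toLp 2 ![x, y, z]

lemma pt0 (x y z : ℝ) : pt x y z 0 = x := rfl
lemma pt1 (x y z : ℝ) : pt x y z 1 = y := rfl
lemma pt2 (x y z : ℝ) : pt x y z 2 = z := rfl

lemma dist_pt (x1 y1 z1 x2 y2 z2 : ℝ) :
    dist (pt x1 y1 z1) (pt x2 y2 z2) =
      √((x1 - x2)^2 + (y1 - y2)^2 + (z1 - z2)^2) := by
  rw [EuclideanSpace.dist_eq, Fin.sum_univ_three]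
  simp [pt, Real.dist_eq, sq_abs]

lemma midpoint_pt (x1 y1 z1 x2 y2 z2 : ℝ) :
    midpoint ℝ (pt x1 y1 z1) (pt x2 y2 z2) = pt ((x1+x2)/2) ((y1+y2)/2) ((z1+z2)/2) := by
  ext i
  fin_cases i <;>
    simp [midpoint, pt, Matrix.smul_cons, AffineMap.lineMap] <;> ring

def box (l u : Fin 3 → ℝ) : Set (EuclideanSpace ℝ (Fin 3)) :=
  {x | ∀ i, x i ∈ Icc (l i) (u i)}

lemma volume_box (l u : Fin 3 → ℝ) :
    volume (box l u) = ∏ i, ENNReal.ofReal (u i - l i) := by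
  have h : box l u = (MeasurableEquiv.toLp 2 (Fin 3 → ℝ)).symm ⁻¹'
      (Set.pi univ fun i => Icc (l i) (u i)) := by
    ext x
    simp only [box, mem_setOf_eq, mem_preimage, mem_pi, mem_univ, true_implies]
    rfl
  rw [h, (EuclideanSpace.volume_preserving_symm_measurableEquiv_toLp (Fin 3)).measure_preimage
    (MeasurableSet.univ_pi fun i => measurableSet_Icc).nullMeasurableSet,
    volume_pi_pi]
  simp [Real.volume_Icc]

lemma convex_box (l u : Fin 3 → ℝ) : Convex ℝ (box l u) := by
  intro x hx y hy a b ha hb hab i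
  have hxi := hx i
  have hyi := hy i
  have h1 : (a • x + b • y) i = a * x i + b * y i := rfl
  have hl : (a + b) * l i = l i := by rw [hab, one_mul]
  have hu : (a + b) * u i = u i := by rw [hab, one_mul]
  constructor <;> rw [h1]
  · nlinarith [mul_nonneg ha (sub_nonneg.2 hxi.1), mul_nonneg hb (sub_nonneg.2 hyi.1)]
  · nlinarith [mul_nonneg ha (sub_nonneg.2 hxi.2), mul_nonneg hb (sub_nonneg.2 hyi.2)]

lemma mem_hull4 {s : Set (EuclideanSpace ℝ (Fin 3))} {p₁ p₂ p₃ p₄ : EuclideanSpace ℝ (Fin 3)}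
    (h₁ : p₁ ∈ convexHull ℝ s) (h₂ : p₂ ∈ convexHull ℝ s) (h₃ : p₃ ∈ convexHull ℝ s)
    (h₄ : p₄ ∈ convexHull ℝ s) {a b c d : ℝ} (ha : 0 ≤ a) (hb : 0 ≤ b) (hc : 0 ≤ c)
    (hd : 0 ≤ d) (habcd : a + b + c + d = 1) :
    a • p₁ + b • p₂ + c • p₃ + d • p₄ ∈ convexHull ℝ s := by
  have := (convex_convexHull ℝ s).sum_mem (t := Finset.univ) (w := ![a,b,c,d])
    (z := ![p₁,p₂,p₃,p₄])
    (by intro i _; fin_cases i <;> simpa)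
    (by rw [Fin.sum_univ_four]; simpa)
    (by intro i _; fin_cases i <;> simpa)
  rwa [Fin.sum_univ_four] at this

set_option maxHeartbeats 2000000 in
theorem stmt_18 (c : ℝ) (hc : 0 < c) :
    ∃ A B D E F A' B' D' E' F' : EuclideanSpace ℝ (Fin 3),
      (let C := midpoint ℝ E F
       let C' := midpoint ℝ B' D'
       dist A B = dist A' B' ∧ dist A D = dist A' D' ∧
       dist A E = dist A' E' ∧ dist A F = dist A' F' ∧
       dist B E = dist B' E' ∧ dist B F = dist B' F' ∧
       dist D E = dist D' E' ∧ dist D F = dist D' F' ∧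
       dist B C = dist B' C' ∧ dist D C = dist D' C' ∧
       dist C E = dist C' E' ∧ dist C F = dist C' F') ∧
      0 < MeasureTheory.volume
          (convexHull ℝ ({A, B, D, E, F} : Set (EuclideanSpace ℝ (Fin 3)))) ∧
      MeasureTheory.volume
          (convexHull ℝ ({A', B', D', E'} : Set (EuclideanSpace ℝ (Fin 3))) ∪
           convexHull ℝ ({A', B', D', F'} : Set (EuclideanSpace ℝ (Fin 3))))
        > ENNReal.ofReal c *
          MeasureTheory.volume
            (convexHull ℝ ({A, B, D, E, F} : Set (EuclideanSpace ℝ (Fin 3)))) := by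
  have hc1 : (0:ℝ) < c + 1 := by linarith
  obtain ⟨h, hdef⟩ : ∃ x : ℝ, x = 1 / (1024 * (c + 1)) := ⟨_, rfl⟩
  have hh : 0 < h := by rw [hdef]; positivity
  obtain ⟨s3, hs3def⟩ : ∃ x : ℝ, x = Real.sqrt 3 := ⟨_, rfl⟩
  obtain ⟨s6, hs6def⟩ : ∃ x : ℝ, x = Real.sqrt 6 := ⟨_, rfl⟩
  obtain ⟨b, hbdef⟩ : ∃ x : ℝ, x = Real.sqrt (1 + h^2) := ⟨_, rfl⟩
  have hs3 : s3^2 = 3 := by rw [hs3def]; exact Real.sq_sqrt (by norm_num)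
  have hs6 : s6^2 = 6 := by rw [hs6def]; exact Real.sq_sqrt (by norm_num)
  have hb2 : b^2 = 1 + h^2 := by rw [hbdef]; exact Real.sq_sqrt (by positivity)
  have hs3pos : 0 < s3 := by rw [hs3def]; exact Real.sqrt_pos.mpr (by norm_num)
  have hs6pos : 0 < s6 := by rw [hs6def]; exact Real.sqrt_pos.mpr (by norm_num)
  have hbpos : 0 < b := by rw [hbdef]; exact Real.sqrt_pos.mpr (by positivity)
  have hb1 : 1 ≤ b := by nlinarith [hb2, sq_nonneg h, hbpos]
  have hs3l : 1.7 ≤ s3 := by nlinarith [hs3, hs3pos]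
  have hs3u : s3 ≤ 1.8 := by nlinarith [hs3, hs3pos]
  have hs6l : 2.4 ≤ s6 := by nlinarith [hs6, hs6pos]
  have hs6u : s6 ≤ 2.5 := by nlinarith [hs6, hs6pos]
  refine ⟨pt 0 1 0, pt 0 (-1) h, pt 0 (-1) (-h), pt (-1) 0 0, pt 1 0 0,
    pt 0 s3 0, pt (-b) 0 0, pt b 0 0, pt 0 (s3/3) (s6/3), pt 0 (s3/3) (-(s6/3)),
    ?_, ?_, ?_⟩
  · -- distance equalities
    have hCm : midpoint ℝ (pt (-1) 0 0) (pt 1 0 0) = pt 0 0 0 := by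
      rw [midpoint_pt]; norm_num
    have hC'm : midpoint ℝ (pt (-b) 0 0) (pt b 0 0) = pt 0 0 0 := by
      rw [midpoint_pt]; norm_num
    refine ⟨?_, ?_, ?_, ?_, ?_, ?_, ?_, ?_, ?_, ?_, ?_, ?_⟩
    · rw [dist_pt, dist_pt]; congr 1; ring_nf; linarith [hs3, hs6, hb2]
    · rw [dist_pt, dist_pt]; congr 1; ring_nf; linarith [hs3, hs6, hb2]
    · rw [dist_pt, dist_pt]; congr 1; ring_nf; linarith [hs3, hs6, hb2]
    · rw [dist_pt, dist_pt]; congr 1; ring_nf; linarith [hs3, hs6, hb2]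
    · rw [dist_pt, dist_pt]; congr 1; ring_nf; linarith [hs3, hs6, hb2]
    · rw [dist_pt, dist_pt]; congr 1; ring_nf; linarith [hs3, hs6, hb2]
    · rw [dist_pt, dist_pt]; congr 1; ring_nf; linarith [hs3, hs6, hb2]
    · rw [dist_pt, dist_pt]; congr 1; ring_nf; linarith [hs3, hs6, hb2]
    · rw [hCm, hC'm, dist_pt, dist_pt]; congr 1; ring_nf; linarith [hs3, hs6, hb2]
    · rw [hCm, hC'm, dist_pt, dist_pt]; congr 1; ring_nf; linarith [hs3, hs6, hb2]
    · rw [hCm, hC'm, dist_pt, dist_pt]; congr 1; ring_nf; linarith [hs3, hs6, hb2]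
    · rw [hCm, hC'm, dist_pt, dist_pt]; congr 1; ring_nf; linarith [hs3, hs6, hb2]
  · -- positive volume of P
    have hsub : box ![-(1/8), 0, h/8] ![1/8, 1/8, h/4] ⊆
        convexHull ℝ ({pt 0 1 0, pt 0 (-1) h, pt 0 (-1) (-h), pt (-1) 0 0, pt 1 0 0} :
          Set (EuclideanSpace ℝ (Fin 3))) := by
      intro x hx
      have h0 : -(1/8 : ℝ) ≤ x 0 ∧ x 0 ≤ 1/8 := hx 0
      have h1 : (0:ℝ) ≤ x 1 ∧ x 1 ≤ 1/8 := hx 1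
      have h2 : h/8 ≤ x 2 ∧ x 2 ≤ h/4 := hx 2
      obtain ⟨l4, e4⟩ : ∃ v : ℝ, v = x 2 / h := ⟨_, rfl⟩
      obtain ⟨l1, e1⟩ : ∃ v : ℝ, v = x 1 + l4 := ⟨_, rfl⟩
      obtain ⟨l3, e3⟩ : ∃ v : ℝ, v = (1 - l1 - l4 + x 0)/2 := ⟨_, rfl⟩
      obtain ⟨l2, e2⟩ : ∃ v : ℝ, v = (1 - l1 - l4 - x 0)/2 := ⟨_, rfl⟩
      have hl4l : 1/8 ≤ l4 := by rw [e4, le_div_iff₀ hh]; linarith [h2.1]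
      have hl4u : l4 ≤ 1/4 := by rw [e4, div_le_iff₀ hh]; linarith [h2.2]
      have hx_eq : x = l1 • (pt 0 1 0) + l2 • (pt (-1) 0 0) + l3 • (pt 1 0 0) +
          l4 • (pt 0 (-1) h) := by
        ext i
        fin_cases i
        · show x 0 = l1 * 0 + l2 * (-1) + l3 * 1 + l4 * 0
          rw [e2, e3]; ring
        · show x 1 = l1 * 1 + l2 * 0 + l3 * 0 + l4 * (-1)
          rw [e1]; ring
        · show x 2 = l1 * 0 + l2 * 0 + l3 * 0 + l4 * h
          rw [e4]; field_simp; ring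
      have m1 : pt 0 1 0 ∈ ({pt 0 1 0, pt 0 (-1) h, pt 0 (-1) (-h), pt (-1) 0 0, pt 1 0 0} :
          Set (EuclideanSpace ℝ (Fin 3))) := Set.mem_insert _ _
      have m2 : pt (-1) 0 0 ∈ ({pt 0 1 0, pt 0 (-1) h, pt 0 (-1) (-h), pt (-1) 0 0, pt 1 0 0} :
          Set (EuclideanSpace ℝ (Fin 3))) := Set.mem_insert_of_mem _ (Set.mem_insert_of_mem _
            (Set.mem_insert_of_mem _ (Set.mem_insert _ _)))
      have m3 : pt 1 0 0 ∈ ({pt 0 1 0, pt 0 (-1) h, pt 0 (-1) (-h), pt (-1) 0 0, pt 1 0 0} :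
          Set (EuclideanSpace ℝ (Fin 3))) := Set.mem_insert_of_mem _ (Set.mem_insert_of_mem _
            (Set.mem_insert_of_mem _ (Set.mem_insert_of_mem _ rfl)))
      have m4 : pt 0 (-1) h ∈ ({pt 0 1 0, pt 0 (-1) h, pt 0 (-1) (-h), pt (-1) 0 0, pt 1 0 0} :
          Set (EuclideanSpace ℝ (Fin 3))) := Set.mem_insert_of_mem _ (Set.mem_insert _ _)
      rw [hx_eq]
      refine mem_hull4 (subset_convexHull ℝ _ m1) (subset_convexHull ℝ _ m2)
        (subset_convexHull ℝ _ m3) (subset_convexHull ℝ _ m4) ?_ ?_ ?_ ?_ ?_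
      · rw [e1]; linarith [h1.1, hl4l]
      · rw [e2, e1]; linarith [h1.2, h0.2, hl4u, hl4l]
      · rw [e3, e1]; linarith [h1.2, h0.1, hl4u, hl4l]
      · linarith [hl4l]
      · linarith [e1, e2, e3]
    have hbox : (0:ENNReal) < volume (box ![-(1/8), 0, h/8] ![1/8, 1/8, h/4]) := by
      rw [volume_box, Fin.prod_univ_three]
      simp only [Matrix.cons_val_zero, Matrix.cons_val_one, Matrix.head_cons,
        Matrix.cons_val_two, Matrix.tail_cons]
      refine ENNReal.mul_pos (mul_ne_zero ?_ ?_) ?_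
      · exact (ENNReal.ofReal_pos.mpr (by norm_num)).ne'
      · exact (ENNReal.ofReal_pos.mpr (by norm_num)).ne'
      · exact (ENNReal.ofReal_pos.mpr (by linarith)).ne'
    exact lt_of_lt_of_le hbox (measure_mono hsub)
  · -- volume inequality
    -- upper bound for volume of P
    have hPsub : convexHull ℝ ({pt 0 1 0, pt 0 (-1) h, pt 0 (-1) (-h), pt (-1) 0 0, pt 1 0 0} :
        Set (EuclideanSpace ℝ (Fin 3))) ⊆ box ![-1, -1, -h] ![1, 1, h] := by
      refine convexHull_min ?_ (convex_box _ _)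
      rintro p (rfl | rfl | rfl | rfl | rfl) <;> intro i <;> fin_cases i <;>
        refine ⟨?_, ?_⟩ <;> simp [pt] <;> linarith
    have hPvol : volume (convexHull ℝ
        ({pt 0 1 0, pt 0 (-1) h, pt 0 (-1) (-h), pt (-1) 0 0, pt 1 0 0} :
          Set (EuclideanSpace ℝ (Fin 3)))) ≤ ENNReal.ofReal (8 * h) := by
      refine le_trans (measure_mono hPsub) ?_
      rw [volume_box, Fin.prod_univ_three]
      simp only [Matrix.cons_val_zero, Matrix.cons_val_one, Matrix.head_cons,
        Matrix.cons_val_two, Matrix.tail_cons]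
      rw [← ENNReal.ofReal_mul (by norm_num), ← ENNReal.ofReal_mul (by norm_num)]
      exact ENNReal.ofReal_le_ofReal (by nlinarith)
    -- two auxiliary points on segment B'D'
    have me1 : pt (-b) 0 0 ∈ ({pt 0 s3 0, pt (-b) 0 0, pt b 0 0, pt 0 (s3/3) (s6/3)} :
        Set (EuclideanSpace ℝ (Fin 3))) := Set.mem_insert_of_mem _ (Set.mem_insert _ _)
    have me2 : pt b 0 0 ∈ ({pt 0 s3 0, pt (-b) 0 0, pt b 0 0, pt 0 (s3/3) (s6/3)} :
        Set (EuclideanSpace ℝ (Fin 3))) :=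
      Set.mem_insert_of_mem _ (Set.mem_insert_of_mem _ (Set.mem_insert _ _))
    have me3 : pt 0 s3 0 ∈ ({pt 0 s3 0, pt (-b) 0 0, pt b 0 0, pt 0 (s3/3) (s6/3)} :
        Set (EuclideanSpace ℝ (Fin 3))) := Set.mem_insert _ _
    have me4 : pt 0 (s3/3) (s6/3) ∈ ({pt 0 s3 0, pt (-b) 0 0, pt b 0 0, pt 0 (s3/3) (s6/3)} :
        Set (EuclideanSpace ℝ (Fin 3))) :=
      Set.mem_insert_of_mem _ (Set.mem_insert_of_mem _ (Set.mem_insert_of_mem _ rfl))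
    have hbne : (2:ℝ) * b ≠ 0 := by positivity
    have hT1 : pt (-1) 0 0 ∈ convexHull ℝ
        ({pt 0 s3 0, pt (-b) 0 0, pt b 0 0, pt 0 (s3/3) (s6/3)} :
          Set (EuclideanSpace ℝ (Fin 3))) := by
      have key : pt (-1) 0 0 = ((b+1)/(2*b)) • pt (-b) 0 0 + ((b-1)/(2*b)) • pt b 0 0 +
          (0:ℝ) • pt 0 s3 0 + (0:ℝ) • pt 0 (s3/3) (s6/3) := by
        ext i; fin_cases i
        · show (-1 : ℝ) = (b+1)/(2*b) * (-b) + (b-1)/(2*b) * b + 0 * 0 + 0 * 0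
          field_simp; ring
        · show (0 : ℝ) = (b+1)/(2*b) * 0 + (b-1)/(2*b) * 0 + 0 * s3 + 0 * (s3/3)
          ring
        · show (0 : ℝ) = (b+1)/(2*b) * 0 + (b-1)/(2*b) * 0 + 0 * 0 + 0 * (s6/3)
          ring
      rw [key]
      exact mem_hull4 (subset_convexHull ℝ _ me1) (subset_convexHull ℝ _ me2)
        (subset_convexHull ℝ _ me3) (subset_convexHull ℝ _ me4)
        (by positivity) (div_nonneg (by linarith) (by positivity)) le_rfl le_rfl
        (by field_simp; ring)
    have hT2 : pt 1 0 0 ∈ convexHull ℝ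
        ({pt 0 s3 0, pt (-b) 0 0, pt b 0 0, pt 0 (s3/3) (s6/3)} :
          Set (EuclideanSpace ℝ (Fin 3))) := by
      have key : pt 1 0 0 = ((b-1)/(2*b)) • pt (-b) 0 0 + ((b+1)/(2*b)) • pt b 0 0 +
          (0:ℝ) • pt 0 s3 0 + (0:ℝ) • pt 0 (s3/3) (s6/3) := by
        ext i; fin_cases i
        · show (1 : ℝ) = (b-1)/(2*b) * (-b) + (b+1)/(2*b) * b + 0 * 0 + 0 * 0
          field_simp; ring
        · show (0 : ℝ) = (b-1)/(2*b) * 0 + (b+1)/(2*b) * 0 + 0 * s3 + 0 * (s3/3)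
          ring
        · show (0 : ℝ) = (b-1)/(2*b) * 0 + (b+1)/(2*b) * 0 + 0 * 0 + 0 * (s6/3)
          ring
      rw [key]
      exact mem_hull4 (subset_convexHull ℝ _ me1) (subset_convexHull ℝ _ me2)
        (subset_convexHull ℝ _ me3) (subset_convexHull ℝ _ me4)
        (div_nonneg (by linarith) (by positivity)) (by positivity) le_rfl le_rfl
        (by field_simp; ring)
    -- the box inside Q
    have hQsub : box ![-(1/8), 3/8, 1/8] ![1/8, 5/8, 3/8] ⊆ convexHull ℝ
        ({pt 0 s3 0, pt (-b) 0 0, pt b 0 0, pt 0 (s3/3) (s6/3)} :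
          Set (EuclideanSpace ℝ (Fin 3))) := by
      intro x hx
      have h0 : -(1/8 : ℝ) ≤ x 0 ∧ x 0 ≤ 1/8 := hx 0
      have h1 : (3/8 : ℝ) ≤ x 1 ∧ x 1 ≤ 5/8 := hx 1
      have h2 : (1/8 : ℝ) ≤ x 2 ∧ x 2 ≤ 3/8 := hx 2
      have p1 : 0.6375 ≤ x 1 * s3 := by
        nlinarith [mul_nonneg (sub_nonneg.2 h1.1) (sub_nonneg.2 hs3l), h1.1, hs3l]
      have p1u : x 1 * s3 ≤ 1.125 := by
        nlinarith [mul_nonneg (sub_nonneg.2 h1.2) hs3pos.le, h1.2, hs3u, hs3pos]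
      have p2 : 0.3 ≤ x 2 * s6 := by
        nlinarith [mul_nonneg (sub_nonneg.2 h2.1) (sub_nonneg.2 hs6l), h2.1, hs6l]
      have p2u : x 2 * s6 ≤ 0.9375 := by
        nlinarith [mul_nonneg (sub_nonneg.2 h2.2) hs6pos.le, h2.2, hs6u, hs6pos]
      obtain ⟨l4, e4⟩ : ∃ v : ℝ, v = x 2 * s6 / 2 := ⟨_, rfl⟩
      obtain ⟨l3, e3⟩ : ∃ v : ℝ, v = x 1 * s3 / 3 - x 2 * s6 / 6 := ⟨_, rfl⟩
      obtain ⟨l2, e2⟩ : ∃ v : ℝ, v = (1 - l3 - l4 + x 0)/2 := ⟨_, rfl⟩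
      obtain ⟨l1, e1⟩ : ∃ v : ℝ, v = (1 - l3 - l4 - x 0)/2 := ⟨_, rfl⟩
      have hl4 : 0 ≤ l4 := by rw [e4]; linarith
      have hl3 : 0 ≤ l3 := by rw [e3]; linarith
      have hl34 : l3 + l4 ≤ 0.6875 := by rw [e3, e4]; linarith
      have hl2 : 0 ≤ l2 := by rw [e2]; linarith [h0.1]
      have hl1 : 0 ≤ l1 := by rw [e1]; linarith [h0.2]
      have hx_eq : x = l1 • pt (-1) 0 0 + l2 • pt 1 0 0 + l3 • pt 0 s3 0 +
          l4 • pt 0 (s3/3) (s6/3) := by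
        ext i; fin_cases i
        · show x 0 = l1 * (-1) + l2 * 1 + l3 * 0 + l4 * 0
          rw [e1, e2]; ring
        · show x 1 = l1 * 0 + l2 * 0 + l3 * s3 + l4 * (s3/3)
          rw [e3, e4]; linear_combination (-(x 1)/3) * hs3
        · show x 2 = l1 * 0 + l2 * 0 + l3 * 0 + l4 * (s6/3)
          rw [e4]; linear_combination (-(x 2)/6) * hs6
      rw [hx_eq]
      exact mem_hull4 hT1 hT2 (subset_convexHull ℝ _ me3) (subset_convexHull ℝ _ me4)
        hl1 hl2 hl3 hl4 (by rw [e1, e2]; ring)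
    have hQvol : ENNReal.ofReal (1/64) ≤ volume
        (convexHull ℝ ({pt 0 s3 0, pt (-b) 0 0, pt b 0 0, pt 0 (s3/3) (s6/3)} :
            Set (EuclideanSpace ℝ (Fin 3))) ∪
         convexHull ℝ ({pt 0 s3 0, pt (-b) 0 0, pt b 0 0, pt 0 (s3/3) (-(s6/3))} :
            Set (EuclideanSpace ℝ (Fin 3)))) := by
      have hb1' : ENNReal.ofReal (1/64) ≤ volume (box ![-(1/8), 3/8, 1/8] ![1/8, 5/8, 3/8]) := by
        rw [volume_box, Fin.prod_univ_three]
        simp only [Matrix.cons_val_zero, Matrix.cons_val_one, Matrix.head_cons,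
          Matrix.cons_val_two, Matrix.tail_cons]
        rw [← ENNReal.ofReal_mul (by norm_num), ← ENNReal.ofReal_mul (by norm_num)]
        exact ENNReal.ofReal_le_ofReal (by norm_num)
      exact le_trans hb1' (le_trans (measure_mono hQsub)
        (measure_mono Set.subset_union_left))
    -- conclusion
    have hkey : c * (8 * h) < 1/64 := by
      rw [hdef, show c * (8 * (1 / (1024 * (c + 1)))) = (8*c) / (1024*(c+1)) by ring,
        div_lt_iff₀ (by positivity)]
      nlinarith
    calc ENNReal.ofReal c * volume (convexHull ℝ
          ({pt 0 1 0, pt 0 (-1) h, pt 0 (-1) (-h), pt (-1) 0 0, pt 1 0 0} :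
            Set (EuclideanSpace ℝ (Fin 3))))
        ≤ ENNReal.ofReal c * ENNReal.ofReal (8 * h) := mul_le_mul_right hPvol _
      _ = ENNReal.ofReal (c * (8 * h)) := (ENNReal.ofReal_mul hc.le).symm
      _ < ENNReal.ofReal (1/64) := by
          rw [ENNReal.ofReal_lt_ofReal_iff (by norm_num)]; exact hkey
      _ ≤ _ := hQvol
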